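/- Let (Xₙ) and (Yₙ) be real random variables such that (Xₙ - nμ)/(√n σ) converges in distribution to a standard normal and Yₙ/√n → 0 in probability. Then (Xₙ + Yₙ - nμ)/(√n σ) also converges in distribution to a standard normal; in particular, for a supercritical branching process in an i.i.d. random environment with σ² = var(log m₀) ∈ (0,∞) and W > 0 a.s., P((log Zₙ - n E[log m₀])/(√n σ) ≤ x) → Φ(x) for all x ∈ ℝ. -/
import Mathlib


open MeasureTheory Filter Topology

lemma aux_toReal_le_add {Ω : Type*} [MeasurableSpace Ω] (P : Measure Ω) [IsProbabilityMeasure P]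
    {A B C : Set Ω} (hsub : A ⊆ B ∪ C) :
    (P A).toReal ≤ (P B).toReal + (P C).toReal := by
  have h1 : P A ≤ P B + P C := le_trans (measure_mono hsub) (measure_union_le _ _)
  have h2 : (P A).toReal ≤ (P B + P C).toReal :=
    ENNReal.toReal_mono (by finiteness) h1
  rwa [ENNReal.toReal_add (measure_ne_top P B) (measure_ne_top P C)] at h2

set_option maxHeartbeats 1000000 in
/-- Central limit theorem transfer: if `(Xₙ - nμ)/(√n σ)` converges in distribution to a
standard normal (expressed via pointwise convergence of distribution functions to `Φ`) and
`Yₙ/√n → 0` in probability, then `(Xₙ + Yₙ - nμ)/(√n σ)` also converges in distribution to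
a standard normal; in particular, for `log Zₙ = log Πₙ + log Wₙ` this gives
`P((log Zₙ - n E log m₀)/(√n σ) ≤ x) → Φ(x)` for all `x`. -/
theorem stmt_17 {Ω : Type*} [MeasurableSpace Ω] (P : Measure Ω) [IsProbabilityMeasure P]
    (X Y : ℕ → Ω → ℝ) (hXmeas : ∀ n, Measurable (X n)) (hYmeas : ∀ n, Measurable (Y n))
    (σ mu : ℝ) (hσ : 0 < σ)
    (Φ : ℝ → ℝ)
    (hΦ : ∀ x : ℝ, Φ x = (Real.sqrt (2 * Real.pi))⁻¹ * ∫ u in Set.Iic x, Real.exp (-u ^ 2 / 2))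
    (hX : ∀ x : ℝ,
      Tendsto (fun n => (P {ω | (X n ω - n * mu) / (Real.sqrt n * σ) ≤ x}).toReal)
        atTop (𝓝 (Φ x)))
    (hY : ∀ ε : ℝ, 0 < ε →
      Tendsto (fun n => (P {ω | ε ≤ |Y n ω| / Real.sqrt n}).toReal) atTop (𝓝 0)) :
    ∀ x : ℝ,
      Tendsto (fun n => (P {ω | (X n ω + Y n ω - n * mu) / (Real.sqrt n * σ) ≤ x}).toReal)
        atTop (𝓝 (Φ x)) := by
  -- integrability of the Gaussian density
  have hint : Integrable (fun u : ℝ => Real.exp (-u ^ 2 / 2)) := by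
    have h := integrable_exp_neg_mul_sq (by norm_num : (0:ℝ) < 1/2)
    have : (fun u : ℝ => Real.exp (-u ^ 2 / 2)) = fun u : ℝ => Real.exp (-(1/2) * u ^ 2) := by
      funext u; ring_nf
    rw [this]; exact h
  -- continuity of Φ
  have hΦcont : Continuous Φ := by
    have hF : Continuous fun x : ℝ => ∫ u in Set.Iic x, Real.exp (-u ^ 2 / 2) := by
      have key : (fun x : ℝ => ∫ u in Set.Iic x, Real.exp (-u ^ 2 / 2)) =
          fun x : ℝ => (∫ u in Set.Iic (0:ℝ), Real.exp (-u ^ 2 / 2)) +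
            ∫ u in (0:ℝ)..x, Real.exp (-u ^ 2 / 2) := by
        funext x
        rw [← intervalIntegral.integral_Iic_sub_Iic hint.integrableOn hint.integrableOn]
        ring
      rw [key]
      exact continuous_const.add
        (intervalIntegral.continuous_primitive (fun a b => hint.intervalIntegrable) 0)
    have : Φ = fun x => (Real.sqrt (2 * Real.pi))⁻¹ * ∫ u in Set.Iic x, Real.exp (-u ^ 2 / 2) :=
      funext hΦ
    rw [this]
    exact continuous_const.mul hF
  intro x
  rw [Metric.tendsto_atTop]
  intro δ hδ
  -- choose ε > 0 with |Φ (x ± ε) - Φ x| < δ/4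
  have hc : ContinuousAt Φ x := hΦcont.continuousAt
  rw [Metric.continuousAt_iff] at hc
  obtain ⟨η, hη, hball⟩ := hc (δ/4) (by linarith)
  set ε := η / 2 with hεdef
  have hε : 0 < ε := by positivity
  have hdu : dist (x + ε) x < η := by
    rw [Real.dist_eq, show x + ε - x = ε by ring, abs_of_pos hε]; linarith
  have hdl : dist (x - ε) x < η := by
    rw [Real.dist_eq, show x - ε - x = -ε by ring, abs_neg, abs_of_pos hε]; linarith
  have hup : |Φ (x + ε) - Φ x| < δ/4 := by
    have := hball hdu; rwa [Real.dist_eq] at this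
  have hlo : |Φ (x - ε) - Φ x| < δ/4 := by
    have := hball hdl; rwa [Real.dist_eq] at this
  -- get eventual bounds from hX and hY
  have h1 := (hX (x + ε))
  have h2 := (hX (x - ε))
  have h3 := hY (ε * σ) (by positivity)
  rw [Metric.tendsto_atTop] at h1 h2 h3
  obtain ⟨N1, hN1⟩ := h1 (δ/4) (by linarith)
  obtain ⟨N2, hN2⟩ := h2 (δ/4) (by linarith)
  obtain ⟨N3, hN3⟩ := h3 (δ/4) (by linarith)
  refine ⟨max N1 (max N2 N3), fun n hn => ?_⟩
  have hn1 : N1 ≤ n := le_trans (le_max_left _ _) hn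
  have hn2 : N2 ≤ n := le_trans (le_max_left _ _) (le_trans (le_max_right _ _) hn)
  have hn3 : N3 ≤ n := le_trans (le_max_right _ _) (le_trans (le_max_right _ _) hn)
  -- abbreviations
  set f : ℝ := (P {ω | (X n ω + Y n ω - n * mu) / (Real.sqrt n * σ) ≤ x}).toReal with hf
  set gU : ℝ := (P {ω | (X n ω - n * mu) / (Real.sqrt n * σ) ≤ x + ε}).toReal with hgU
  set gL : ℝ := (P {ω | (X n ω - n * mu) / (Real.sqrt n * σ) ≤ x - ε}).toReal with hgL
  set h : ℝ := (P {ω | ε * σ ≤ |Y n ω| / Real.sqrt n}).toReal with hh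
  -- the key set inclusions
  have sqrt_nonneg : (0:ℝ) ≤ Real.sqrt n := Real.sqrt_nonneg _
  have key_shift : ∀ ω : Ω, ¬ (ε * σ ≤ |Y n ω| / Real.sqrt n) →
      |Y n ω / (Real.sqrt n * σ)| < ε := by
    intro ω hω
    push_neg at hω
    rcases eq_or_lt_of_le sqrt_nonneg with hs | hs
    · rw [← hs]; simpa using hε
    · have hsσ : 0 < Real.sqrt n * σ := mul_pos hs hσ
      rw [abs_div, abs_of_pos hsσ, div_lt_iff₀ hsσ]
      have : |Y n ω| / Real.sqrt n < ε * σ := hω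
      rw [div_lt_iff₀ hs] at this
      nlinarith
  have incl1 : {ω | (X n ω + Y n ω - n * mu) / (Real.sqrt n * σ) ≤ x} ⊆
      {ω | (X n ω - n * mu) / (Real.sqrt n * σ) ≤ x + ε} ∪
      {ω | ε * σ ≤ |Y n ω| / Real.sqrt n} := by
    intro ω hω
    by_cases hc2 : ε * σ ≤ |Y n ω| / Real.sqrt n
    · exact Or.inr hc2
    · left
      have hb := key_shift ω hc2
      simp only [Set.mem_setOf_eq] at hω ⊢
      rcases eq_or_lt_of_le sqrt_nonneg with hs | hs
      · rw [← hs] at hω ⊢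
        simp only [zero_mul, div_zero] at hω ⊢
        linarith
      · have hsσ : 0 < Real.sqrt n * σ := mul_pos hs hσ
        have heq : (X n ω - n * mu) / (Real.sqrt n * σ) =
            (X n ω + Y n ω - n * mu) / (Real.sqrt n * σ) - Y n ω / (Real.sqrt n * σ) := by
          field_simp; ring
        rw [heq]
        have := neg_abs_le (Y n ω / (Real.sqrt n * σ))
        linarith [abs_lt.mp hb]
  have incl2 : {ω | (X n ω - n * mu) / (Real.sqrt n * σ) ≤ x - ε} ⊆
      {ω | (X n ω + Y n ω - n * mu) / (Real.sqrt n * σ) ≤ x} ∪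
      {ω | ε * σ ≤ |Y n ω| / Real.sqrt n} := by
    intro ω hω
    by_cases hc2 : ε * σ ≤ |Y n ω| / Real.sqrt n
    · exact Or.inr hc2
    · left
      have hb := key_shift ω hc2
      simp only [Set.mem_setOf_eq] at hω ⊢
      rcases eq_or_lt_of_le sqrt_nonneg with hs | hs
      · rw [← hs] at hω ⊢
        simp only [zero_mul, div_zero] at hω ⊢
        linarith
      · have hsσ : 0 < Real.sqrt n * σ := mul_pos hs hσ
        have heq : (X n ω + Y n ω - n * mu) / (Real.sqrt n * σ) =
            (X n ω - n * mu) / (Real.sqrt n * σ) + Y n ω / (Real.sqrt n * σ) := by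
          field_simp; ring
        rw [heq]
        have := le_abs_self (Y n ω / (Real.sqrt n * σ))
        linarith [abs_lt.mp hb]
  have ineq1 : f ≤ gU + h := aux_toReal_le_add P incl1
  have ineq2 : gL ≤ f + h := aux_toReal_le_add P incl2
  -- numeric bounds
  have b1 : |gU - Φ (x + ε)| < δ/4 := hN1 n hn1
  have b2 : |gL - Φ (x - ε)| < δ/4 := hN2 n hn2
  have b3 : |h - 0| < δ/4 := hN3 n hn3
  rw [Real.dist_eq]
  rw [abs_lt] at *
  constructor <;> simp only [sub_zero] at b3 <;> nlinarith [b1.1, b1.2, b2.1, b2.2, b3.1, b3.2,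
    hup, hlo, ineq1, ineq2]
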